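/- Let V be an n-dimensional vector space over the finite field F_q and let G₀ ≤ GL(V) act irreducibly on V and contain all scalar matrices. Then for every nonzero u ∈ V, every vector of V can be written as a sum of at most n elements of the orbit u^{G₀}. Consequently every orbital graph of the affine group V⋊G₀ has diameter at most n. -/
import Mathlib


/-- Let `V` be an `n`-dimensional vector space over a finite field and let
`G₀ ≤ GL(V)` act irreducibly on `V` and contain all scalar matrices.  Then for every
nonzero `u ∈ V`, every vector of `V` can be written as a sum of at most `n` elements of
the orbit `u^{G₀}`. -/
theorem stmt1 (F : Type*) [Field F] [Fintype F]
    (V : Type*) [AddCommGroup V] [Module F V] [FiniteDimensional F V]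
    (n : ℕ) (hn : Module.finrank F V = n)
    (G₀ : Subgroup (V ≃ₗ[F] V))
    (hirr : ∀ W : Submodule F V, (∀ g ∈ G₀, ∀ w ∈ W, g w ∈ W) → W = ⊥ ∨ W = ⊤)
    (hscal : ∀ c : F, c ≠ 0 → ∃ g ∈ G₀, ∀ v : V, g v = c • v)
    (u : V) (hu : u ≠ 0) (v : V) :
    ∃ k ≤ n, ∃ f : Fin k → V, (∀ i, f i ∈ MulAction.orbit G₀ u) ∧ ∑ i, f i = v := by
  classical
  set S : Set V := MulAction.orbit G₀ u with hS
  -- scaling a member of the orbit by a nonzero scalar stays in the orbit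
  have hscale : ∀ c : F, c ≠ 0 → ∀ w ∈ S, c • w ∈ S := by
    intro c hc w hw
    obtain ⟨g, hg, hgeq⟩ := hscal c hc
    obtain ⟨h, hh⟩ := hw
    exact ⟨(⟨g, hg⟩ : G₀) * h, by
      simp only [Submonoid.mk_smul, mul_smul] at *
      show g (h • u) = c • w
      rw [show h • u = w from hh, hgeq]⟩
  have hinv : ∀ g ∈ G₀, ∀ w ∈ Submodule.span F S, g w ∈ Submodule.span F S := by
    intro g hg w hw
    have hmem : ∀ x ∈ S, g x ∈ S := by
      intro x hx
      obtain ⟨h, hh⟩ := hx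
      exact ⟨(⟨g, hg⟩ : G₀) * h, by
        simp only [Submonoid.mk_smul, mul_smul]
        show g (h • u) = g x
        exact congrArg g hh⟩
    refine Submodule.span_induction (fun x hx => Submodule.subset_span (hmem x hx))
      (by simp) (fun x y _ _ hx hy => by rw [map_add]; exact Submodule.add_mem _ hx hy)
      (fun c x _ hx => by rw [map_smul]; exact Submodule.smul_mem _ _ hx) hw
  have hspan : Submodule.span F S = ⊤ := by
    rcases hirr (Submodule.span F S) hinv with h | h
    · exfalso
      have hmu : u ∈ Submodule.span F S := Submodule.subset_span (MulAction.mem_orbit_self u)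
      rw [h] at hmu
      exact hu ((Submodule.mem_bot F).mp hmu)
    · exact h
  obtain ⟨b, hbS, hbspan, hbli⟩ := exists_linearIndependent F S
  have hbfin : b.Finite := hbli.setFinite
  haveI := hbfin.fintype
  have hcard : hbfin.toFinset.card ≤ n := by
    rw [← hn]
    calc hbfin.toFinset.card = Fintype.card b := by simp [Set.Finite.card_toFinset]
      _ ≤ _ := hbli.fintype_card_le_finrank
  have hvmem : v ∈ Submodule.span F b := by
    rw [hbspan, hspan]; trivial
  obtain ⟨c, hcsupp, hcsum⟩ := Submodule.mem_span_set.mp hvmem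
  set t := c.support with ht
  have htcard : t.card ≤ n := by
    refine le_trans (Finset.card_le_card ?_) hcard
    intro x hx
    simp only [Set.Finite.mem_toFinset]
    exact hcsupp hx
  refine ⟨t.card, htcard, fun i => c (t.equivFin.symm i) • (t.equivFin.symm i : V), ?_, ?_⟩
  · intro i
    have hx : (t.equivFin.symm i : V) ∈ t := (t.equivFin.symm i).2
    have hxS : (t.equivFin.symm i : V) ∈ S := hbS (hcsupp hx)
    exact hscale _ (Finsupp.mem_support_iff.mp hx) _ hxS
  · rw [← hcsum, Finsupp.sum]
    rw [Equiv.sum_comp t.equivFin.symm (fun x : t => c (x : V) • (x : V))]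
    exact Finset.sum_coe_sort t (fun a => c a • a)
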